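/- Efficiency under saturation: assume consistency b_h(u,ν) = ℓ(ν) for ν ∈ V_h, and the saturation assumption |||u − θ_h||| ≤ C_s |||u − u_h||| with C_s ∈ [0,1), where θ_h is the Galerkin solution in V_h and u_h the residual-minimization solution in U_h ⊂ V_h. Then |||ε_h||| ≲ |||u − u_h|||, with hidden constant depending only on C_s and the coercivity/continuity constants relating |||·||| to the V_h inner product. -/
import Mathlib


open scoped RealInnerProductSpace

/-- Efficiency under saturation. Assume consistency
`b_h(u,·) = ℓ` on `V_h` and the saturation assumption
`|||u − θ_h||| ≤ C_s |||u − u_h|||` with `C_s ∈ [0,1)`, where `θ_h` is the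
Galerkin solution in `V_h` and `u_h` the residual-minimization solution in
`U_h ⊂ V_h`. Then `|||ε_h||| ≲ |||u − u_h|||`, with constant depending only on
`C_s`, the continuity constant `M` of `b_h` and the norm-equivalence constant
`c₂` relating `|||·||| = N` to the `V_h` inner product norm
(explicitly: `c₂²·M·(1 + C_s)`). -/
theorem stmt_8 {W : Type*} [NormedAddCommGroup W] [InnerProductSpace ℝ W]
    [FiniteDimensional ℝ W]
    (V U : Submodule ℝ W) (hUV : U ≤ V)
    (b : W →ₗ[ℝ] W →ₗ[ℝ] ℝ) (ℓ : W →ₗ[ℝ] ℝ)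
    (N : W → ℝ) (M c₂ Cs : ℝ) (hM : 0 < M) (hc₂ : 0 < c₂)
    (hCs0 : 0 ≤ Cs) (hCs1 : Cs < 1)
    -- seminorm properties of |||·|||
    (hN0 : ∀ x : W, 0 ≤ N x)
    (hNtri : ∀ x y : W, N (x + y) ≤ N x + N y)
    (hNsym : ∀ x : W, N (-x) = N x)
    -- continuity of b_h on V_h w.r.t. |||·|||
    (hbnd : ∀ v ∈ V, ∀ w ∈ V, |b v w| ≤ M * N v * N w)
    -- norm equivalence on V_h
    (heq : ∀ v ∈ V, N v ≤ c₂ * ‖v‖)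
    (u θh εh uh : W)
    (hθ : θh ∈ V) (hε : εh ∈ V) (huh : uh ∈ U)
    -- consistency with the exact solution u
    (hcons : ∀ ν ∈ V, b u ν = ℓ ν)
    -- Galerkin solution θ_h
    (hGal : ∀ ν ∈ V, b θh ν = ℓ ν)
    -- saddle-point system: residual representative ε_h
    (h1 : ∀ ν ∈ V, ⟪εh, ν⟫ + b uh ν = ℓ ν)
    (h2 : ∀ w ∈ U, b w εh = 0)
    -- saturation assumption
    (hsat : N (u - θh) ≤ Cs * N (u - uh)) :
    N εh ≤ c₂^2 * M * (1 + Cs) * N (u - uh) := by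
  have huhV : uh ∈ V := hUV huh
  have hsub : θh - uh ∈ V := Submodule.sub_mem V hθ huhV
  -- ⟪εh,εh⟫ = b (θh - uh) εh
  have key : ⟪εh, εh⟫ = b (θh - uh) εh := by
    have hA := h1 εh hε
    have hg := hGal εh hε
    have : (b (θh - uh)) εh = b θh εh - b uh εh := by
      simp [map_sub]
    rw [this]; linarith
  -- triangle-type bound on N (θh - uh)
  have hNtu : N (θh - uh) ≤ (1 + Cs) * N (u - uh) := by
    have h3 : θh - uh = (-(u - θh)) + (u - uh) := by abel
    have h4 : N (θh - uh) ≤ N (-(u - θh)) + N (u - uh) := by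
      rw [h3]; exact hNtri _ _
    rw [hNsym] at h4
    nlinarith [hN0 (u - uh)]
  have hnormsq : ‖εh‖ ^ 2 ≤ M * N (θh - uh) * (c₂ * ‖εh‖) := by
    have h5 : ‖εh‖ ^ 2 = ⟪εh, εh⟫ := (real_inner_self_eq_norm_sq εh).symm
    have h6 : |b (θh - uh) εh| ≤ M * N (θh - uh) * N εh := hbnd _ hsub _ hε
    have h7 : N εh ≤ c₂ * ‖εh‖ := heq _ hε
    have h8 : b (θh - uh) εh ≤ M * N (θh - uh) * N εh := (abs_le.mp h6).2
    have h9 : 0 ≤ M * N (θh - uh) := mul_nonneg hM.le (hN0 _)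
    nlinarith [hN0 εh]
  have hεbd : ‖εh‖ ≤ c₂ * M * N (θh - uh) := by
    rcases eq_or_lt_of_le (norm_nonneg εh) with h | h
    · rw [← h]; exact mul_nonneg (mul_nonneg hc₂.le hM.le) (hN0 _)
    · nlinarith
  have h10 : N εh ≤ c₂ * ‖εh‖ := heq _ hε
  have h11 : 0 ≤ N (θh - uh) := hN0 _
  nlinarith [hN0 (u - uh), mul_le_mul_of_nonneg_left hεbd hc₂.le,
    mul_le_mul_of_nonneg_left hNtu (by positivity : (0:ℝ) ≤ c₂^2 * M)]
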